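/- Let L be a free ℤ-module of finite rank k with a negative definite symmetric bilinear form B : L × L → ℤ containing elements α₁, …, α_k with B(α_i, α_i) = −1 for all i and α_i ≠ ±α_j for i ≠ j. Then for every ℤ-basis (e₁, …, e_k) of L, the determinant of the Gram matrix (B(e_i, e_j)) equals (−1)^k; in particular B is unimodular. -/

import Mathlib

/-- Under the hypotheses of Lemma 2, the determinant of the Gram matrix
of `B` in every `ℤ`-basis of `L` equals `(−1)^k`; in particular `B` is
unimodular. -/
theorem neg_def_gram_det_eq_neg_one_pow
    (L : Type*) [AddCommGroup L] [Module ℤ L]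
    [Module.Free ℤ L] [Module.Finite ℤ L]
    (B : L →ₗ[ℤ] L →ₗ[ℤ] ℤ)
    (hsymm : ∀ u v : L, B u v = B v u)
    (hneg : ∀ v : L, v ≠ 0 → B v v < 0)
    (k : ℕ) (hrank : Module.finrank ℤ L = k)
    (α : Fin k → L)
    (hdiag : ∀ i, B (α i) (α i) = -1)
    (hne : ∀ i j, i ≠ j → α i ≠ α j ∧ α i ≠ -α j) :
    ∀ e : Module.Basis (Fin k) ℤ L,
      (Matrix.of fun i j => B (e i) (e j)).det = (-1 : ℤ) ^ k := by
  intro e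
  -- orthogonality of the α's
  have horth : ∀ i j, B (α i) (α j) = if i = j then (-1 : ℤ) else 0 := by
    intro i j
    by_cases h : i = j
    · simp [h, hdiag]
    · simp only [h, if_false]
      obtain ⟨h1, h2⟩ := hne i j h
      have hp : α i + α j ≠ 0 := fun hc => h2 (eq_neg_of_add_eq_zero_left hc)
      have hm : α i - α j ≠ 0 := fun hc => h1 (sub_eq_zero.mp hc)
      have Hp := hneg _ hp
      have Hm := hneg _ hm
      simp only [map_add, map_sub, LinearMap.add_apply, LinearMap.sub_apply] at Hp Hm
      have hs : B (α j) (α i) = B (α i) (α j) := hsymm _ _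
      rw [hdiag i, hdiag j, hs] at Hp Hm
      omega
  set G : Matrix (Fin k) (Fin k) ℤ := Matrix.of fun i j => B (e i) (e j) with hGdef
  set C : Matrix (Fin k) (Fin k) ℤ := Matrix.of fun i j => e.repr (α i) j with hCdef
  have hB : ∀ i j, B (α i) (α j) = ∑ a, ∑ b, C i a * C j b * G a b := by
    intro i j
    conv_lhs => rw [← e.sum_repr (α i), ← e.sum_repr (α j)]
    simp only [map_sum, map_smul, LinearMap.sum_apply, LinearMap.smul_apply, smul_eq_mul,
      Finset.mul_sum]
    rw [Finset.sum_comm]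
    refine Finset.sum_congr rfl fun a _ => Finset.sum_congr rfl fun b _ => ?_
    simp only [hGdef, hCdef, Matrix.of_apply]
    ring
  have hMat : C * G * C.transpose = Matrix.diagonal (fun _ => (-1 : ℤ)) := by
    ext i j
    rw [Matrix.diagonal_apply]
    rw [← horth i j, hB i j]
    simp only [Matrix.mul_apply, Matrix.transpose_apply, Finset.sum_mul]
    rw [Finset.sum_comm]
    refine Finset.sum_congr rfl fun a _ => Finset.sum_congr rfl fun b _ => ?_
    ring
  have hdet : C.det * G.det * C.det = (-1 : ℤ) ^ k := by
    have := congrArg Matrix.det hMat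
    rwa [Matrix.det_mul, Matrix.det_mul, Matrix.det_transpose, Matrix.det_diagonal,
      Finset.prod_const, Finset.card_fin] at this
  have hunit : IsUnit (C.det ^ 2) := by
    have : G.det * C.det ^ 2 = (-1 : ℤ) ^ k := by rw [← hdet]; ring
    have hu : IsUnit ((-1 : ℤ) ^ k) := (isUnit_one.neg).pow k
    rw [← this] at hu
    exact isUnit_of_mul_isUnit_right hu
  have hsq : C.det ^ 2 = 1 := by
    rcases Int.isUnit_iff.mp hunit with h | h
    · exact h
    · nlinarith [sq_nonneg C.det]
  have : G.det * C.det ^ 2 = (-1 : ℤ) ^ k := by rw [← hdet]; ring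
  rw [hsq, mul_one] at this
  exact this
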